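/- If the rooted tree (T', R') is obtained from a balanced rooted tree (T, R) with a unrooted vertices and b edges by attaching one new rooted leaf to every unrooted vertex of T, then (T', R') is balanced and has a unrooted vertices and b + a edges. -/

import Mathlib

/-- `eCount G S` is the number of edges of `G` with at least one endpoint in `S`. -/
noncomputable def eCount {V : Type} (G : SimpleGraph V) (S : Set V) : ℕ :=
  {e ∈ G.edgeSet | ∃ v ∈ S, v ∈ e}.ncard

/-- The graph obtained from `T` by attaching one new (rooted) leaf to every vertex
outside the root set `R`. -/
def attachLeaves {α : Type} (T : SimpleGraph α) (R : Finset α) :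
    SimpleGraph (α ⊕ {v : α // v ∉ R}) :=
  SimpleGraph.fromRel (fun x y =>
    match x, y with
    | Sum.inl u, Sum.inl v => T.Adj u v
    | Sum.inl u, Sum.inr w => u = (w : α)
    | _, _ => False)

section helpers
variable {α : Type} (T : SimpleGraph α) (R : Finset α)

lemma adj_ll (u v : α) : (attachLeaves T R).Adj (Sum.inl u) (Sum.inl v) ↔ T.Adj u v := by
  simp only [attachLeaves, SimpleGraph.fromRel_adj]
  constructor
  · rintro ⟨h, h2 | h2⟩ <;> [exact h2; exact h2.symm]
  · intro h; exact ⟨by simpa using T.ne_of_adj h, Or.inl h⟩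

lemma adj_lr (u : α) (w : {v : α // v ∉ R}) :
    (attachLeaves T R).Adj (Sum.inl u) (Sum.inr w) ↔ u = (w : α) := by
  simp [attachLeaves, SimpleGraph.fromRel_adj]

lemma adj_rr (w w' : {v : α // v ∉ R}) : ¬ (attachLeaves T R).Adj (Sum.inr w) (Sum.inr w') := by
  simp [attachLeaves, SimpleGraph.fromRel_adj]

lemma key (S₀ : Set α) :
    {e ∈ (attachLeaves T R).edgeSet | ∃ v ∈ Sum.inl '' S₀, v ∈ e} =
      Sym2.map Sum.inl '' {e ∈ T.edgeSet | ∃ v ∈ S₀, v ∈ e} ∪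
      (fun w : {v : α // v ∉ R} => s(Sum.inl (w:α), Sum.inr w)) '' {w | (w:α) ∈ S₀} := by
  ext e
  induction e using Sym2.ind with
  | _ x y =>
    constructor
    · rintro ⟨hadj, v, ⟨u, hu, rfl⟩, hv⟩
      rw [SimpleGraph.mem_edgeSet] at hadj
      match x, y with
      | Sum.inl p, Sum.inl q =>
        left
        refine ⟨s(p, q), ⟨(adj_ll T R p q).mp hadj, u, hu, ?_⟩, by simp⟩
        rcases Sym2.mem_iff.mp hv with h | h <;> simp [Sum.inl.inj h]
      | Sum.inl p, Sum.inr w =>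
        right
        have hpw : p = (w : α) := (adj_lr T R p w).mp hadj
        have : u = p := by
          rcases Sym2.mem_iff.mp hv with h | h
          · exact Sum.inl.inj h
          · exact absurd h (by simp)
        exact ⟨w, by simp [← hpw, ← this, hu], by simp [hpw]⟩
      | Sum.inr w, Sum.inl p =>
        right
        have hpw : p = (w : α) := (adj_lr T R p w).mp hadj.symm
        have : u = p := by
          rcases Sym2.mem_iff.mp hv with h | h
          · exact absurd h (by simp)
          · exact Sum.inl.inj h
        refine ⟨w, by simp [← hpw, ← this, hu], ?_⟩
        rw [Sym2.eq_swap]; simp [hpw]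
      | Sum.inr w, Sum.inr w' => exact absurd hadj (adj_rr T R w w')
    · rintro (⟨e', ⟨he', u, hu, hue⟩, heq⟩ | ⟨w, hw, heq⟩)
      · induction e' using Sym2.ind with
        | _ p q =>
          rw [Sym2.map_pair_eq] at heq
          refine ⟨?_, Sum.inl u, ⟨u, hu, rfl⟩, ?_⟩
          · rw [← heq, SimpleGraph.mem_edgeSet]
            exact (adj_ll T R p q).mpr he'
          · rw [← heq]; rcases Sym2.mem_iff.mp hue with h | h <;> simp [h]
      · refine ⟨?_, Sum.inl (w : α), ⟨(w : α), hw, rfl⟩, ?_⟩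
        · rw [← heq, SimpleGraph.mem_edgeSet]; exact (adj_lr T R _ w).mpr rfl
        · rw [← heq]; simp

lemma card_union [Fintype α] [DecidableEq α] (E : Set (Sym2 α)) (W : Set {v : α // v ∉ R}) :
    (Sym2.map Sum.inl '' E ∪
      (fun w : {v : α // v ∉ R} => s(Sum.inl (w:α), Sum.inr w)) '' W
      : Set (Sym2 (α ⊕ {v : α // v ∉ R}))).ncard = E.ncard + W.ncard := by
  rw [Set.ncard_union_eq ?_ (Set.toFinite _) (Set.toFinite _),
    Set.ncard_image_of_injective _ (Sym2.map.injective Sum.inl_injective),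
    Set.ncard_image_of_injective]
  · intro w w' h
    simp only [Sym2.eq, Sym2.rel_iff', Prod.mk.injEq] at h
    rcases h with ⟨h, _⟩ | ⟨h, _⟩ <;> simp_all
  · rw [Set.disjoint_left]
    rintro e ⟨e', _, rfl⟩ ⟨w, _, heq⟩
    have : (Sum.inr w : α ⊕ {v : α // v ∉ R}) ∈ Sym2.map Sum.inl e' := by
      rw [← heq]; simp
    rcases Sym2.mem_map.mp this with ⟨u, _, h⟩
    exact Sum.inl_ne_inr h

lemma ncard_W {S₀ : Set α} (hS₀ : S₀ ⊆ {v | v ∉ R}) :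
    ({w : {v : α // v ∉ R} | (w:α) ∈ S₀}).ncard = S₀.ncard := by
  rw [← Set.ncard_image_of_injective _ Subtype.val_injective]
  congr 1
  ext v
  constructor
  · rintro ⟨w, hw, rfl⟩; exact hw
  · intro hv; exact ⟨⟨v, hS₀ hv⟩, hv, rfl⟩

lemma eCount_attach [Fintype α] [DecidableEq α] {S₀ : Set α} (hS₀ : S₀ ⊆ {v | v ∉ R}) :
    eCount (attachLeaves T R) (Sum.inl '' S₀) = eCount T S₀ + S₀.ncard := by
  rw [eCount, key, card_union, ncard_W _ hS₀, eCount]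

lemma edgeSet_attach :
    (attachLeaves T R).edgeSet =
      Sym2.map Sum.inl '' T.edgeSet ∪
      (fun w : {v : α // v ∉ R} => s(Sum.inl (w:α), Sum.inr w)) '' Set.univ := by
  have h := key T R Set.univ
  have h1 : {e ∈ (attachLeaves T R).edgeSet | ∃ v ∈ Sum.inl '' (Set.univ : Set α), v ∈ e} =
      (attachLeaves T R).edgeSet := by
    ext e
    simp only [Set.mem_setOf_eq, and_iff_left_iff_imp]
    intro he
    induction e using Sym2.ind with
    | _ x y =>
      rw [SimpleGraph.mem_edgeSet] at he
      match x, y with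
      | Sum.inl p, _ => exact ⟨Sum.inl p, by simp, by simp⟩
      | Sum.inr w, Sum.inl p => exact ⟨Sum.inl p, by simp, by simp⟩
      | Sum.inr w, Sum.inr w' => exact absurd he (adj_rr T R w w')
  have h2 : {e ∈ T.edgeSet | ∃ v ∈ (Set.univ : Set α), v ∈ e} = T.edgeSet := by
    ext e
    simp only [Set.mem_setOf_eq, and_iff_left_iff_imp]
    intro _
    exact ⟨e.out.1, trivial, Sym2.out_fst_mem e⟩
  have h3 : {w : {v : α // v ∉ R} | (w:α) ∈ (Set.univ : Set α)} = Set.univ := by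
    ext w; simp
  rw [h1, h2, h3] at h
  exact h

end helpers

/-- If `(T', R')` is obtained from a balanced rooted tree `(T, R)` with `a` unrooted
vertices and `b` edges by attaching a new rooted leaf to every unrooted vertex, then
`T'` has `a` unrooted vertices and `b + a` edges and is again balanced (now with
density `(b+a)/a`). -/
theorem stmt_8 {α : Type} [Fintype α] [DecidableEq α]
    (T : SimpleGraph α) (hT : T.IsTree)
    (R : Finset α) (hRind : ∀ u ∈ R, ∀ v ∈ R, ¬ T.Adj u v)
    (a b : ℕ) (ha : a = Fintype.card α - R.card) (hb : b = T.edgeSet.ncard)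
    (hBal : ∀ S : Set α, S ⊆ {v | v ∉ R} →
      (eCount T S : ℝ) ≥ ((b : ℝ) / (a : ℝ)) * S.ncard) :
    (Sum.inl '' {v : α | v ∉ R} : Set (α ⊕ {v : α // v ∉ R})).ncard = a ∧
    (attachLeaves T R).edgeSet.ncard = b + a ∧
    ∀ S : Set (α ⊕ {v : α // v ∉ R}), S ⊆ Sum.inl '' {v : α | v ∉ R} →
      (eCount (attachLeaves T R) S : ℝ) ≥ (((b : ℝ) + a) / (a : ℝ)) * S.ncard := by
  have hcompl : ({v : α | v ∉ R}).ncard = a := by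
    have : {v : α | v ∉ R} = (Rᶜ : Finset α) := by ext v; simp
    rw [this, Set.ncard_coe_finset, Finset.card_compl, ha]
  have huniv : (Set.univ : Set {v : α // v ∉ R}).ncard = a := by
    rw [Set.ncard_univ, Nat.card_eq_fintype_card, Fintype.card_subtype_compl,
      Fintype.card_coe, ha]
  refine ⟨?_, ?_, ?_⟩
  · rw [Set.ncard_image_of_injective _ Sum.inl_injective, hcompl]
  · rw [edgeSet_attach, card_union, huniv, hb]
  · intro S hS
    set S₀ : Set α := Sum.inl ⁻¹' S with hS₀def
    have hS₀sub : S₀ ⊆ {v | v ∉ R} := by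
      intro v hv
      rcases hS hv with ⟨u, hu, he⟩
      rwa [← Sum.inl.inj he]
    have hSim : S = Sum.inl '' S₀ := by
      ext x
      constructor
      · intro hx
        rcases hS hx with ⟨u, hu, rfl⟩
        exact ⟨u, hx, rfl⟩
      · rintro ⟨u, hu, rfl⟩; exact hu
    have hcard : S.ncard = S₀.ncard := by
      rw [hSim, Set.ncard_image_of_injective _ Sum.inl_injective]
    rw [hSim, eCount_attach T R hS₀sub, Set.ncard_image_of_injective _ Sum.inl_injective]
    rcases eq_or_ne a 0 with h0 | h0
    · have hRuniv : R = Finset.univ := by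
        apply Finset.eq_univ_of_card
        have h1 := Finset.card_le_univ R
        omega
      have : S₀ = ∅ := by
        apply Set.eq_empty_iff_forall_notMem.mpr
        intro v hv
        exact hS₀sub hv (hRuniv ▸ Finset.mem_univ v)
      simp [this]
    · have hbal := hBal S₀ hS₀sub
      have haR : (a : ℝ) ≠ 0 := Nat.cast_ne_zero.mpr h0
      have : ((b : ℝ) + a) / a = b / a + 1 := by field_simp
      rw [this, add_mul, one_mul]
      push_cast
      linarith
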